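/- Let 𝔅 be a subalgebra of P(ω), D ⊆ ω, and 𝔠 a subalgebra of the algebra generated by 𝔅 ∪ P(D). Let (μₙ) be a sequence in ℓ¹ (viewed as finitely additive measures on P(ω)) that converges in variation norm on subsets of D. Then any two cluster points μ′, μ″ of {μₙ} in the topology of pointwise convergence on 𝔠 satisfy ‖μ′ − μ″‖_𝔅 = ‖μ′ − μ″‖_𝔠. -/

import Mathlib

open Filter MeasureTheory

/-- The finitely additive measure on `𝒫(ω)` associated to an `ℓ¹` element. -/
noncomputable def l1Meas (x : ℕ → ℝ) (B : Set ℕ) : ℝ := ∑' j : B, x j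

/-- `ν` is a cluster point of the sequence `(l1Meas (μ n))` in the topology of pointwise
convergence on members of the family `𝔄`. -/
def IsClusterPtOn (μ : ℕ → ℕ → ℝ) (𝔄 : Set (Set ℕ)) (ν : Set ℕ → ℝ) : Prop :=
  ∀ ε > (0 : ℝ), ∀ F : Finset (Set ℕ), ↑F ⊆ 𝔄 →
    {n : ℕ | ∀ B ∈ F, |l1Meas (μ n) B - ν B| < ε}.Infinite

/-- The total variation norm of a finitely additive `ν` restricted to the algebra `𝔄`:
`sup_{B ∈ 𝔄} (|ν(B)| + |ν(Bᶜ)|)`. -/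
noncomputable def varNormOn (𝔄 : Set (Set ℕ)) (ν : Set ℕ → ℝ) : ℝ :=
  ⨆ B : 𝔄, (|ν B| + |ν (↑B : Set ℕ)ᶜ|)

lemma abs_sub_le'' (a b : ℝ) : |a - b| ≤ |a| + |b| := by
  calc |a - b| = |a + -b| := by ring_nf
  _ ≤ |a| + |-b| := abs_add_le _ _
  _ = |a| + |b| := by rw [abs_neg]

/-- Every element of the algebra generated by `𝔅 ∪ 𝒫(D)` agrees with some element of `𝔅`
outside of `D`. -/
lemma approx_lemma (𝔅 : Set (Set ℕ)) (h𝔅 : IsSetAlgebra 𝔅) (D : Set ℕ) :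
    ∀ E ∈ generateSetAlgebra (𝔅 ∪ {E : Set ℕ | E ⊆ D}), ∃ B₀ ∈ 𝔅, E \ D = B₀ \ D := by
  intro E hE
  induction hE with
  | base s hs =>
    rcases hs with hs | hs
    · exact ⟨s, hs, rfl⟩
    · refine ⟨∅, h𝔅.empty_mem, ?_⟩
      ext x
      simp only [Set.mem_diff, Set.mem_empty_iff_false, false_and, iff_false, not_and, not_not]
      exact fun hx => hs hx
  | empty => exact ⟨∅, h𝔅.empty_mem, rfl⟩
  | compl s hs ih =>
    obtain ⟨B₀, hB₀, hEq⟩ := ih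
    refine ⟨B₀ᶜ, h𝔅.compl_mem hB₀, ?_⟩
    ext x
    have := Set.ext_iff.mp hEq x
    simp only [Set.mem_diff, Set.mem_compl_iff] at this ⊢
    tauto
  | union s t hs ht ihs iht =>
    obtain ⟨Bs, hBs, hsEq⟩ := ihs
    obtain ⟨Bt, hBt, htEq⟩ := iht
    exact ⟨Bs ∪ Bt, h𝔅.union_mem hBs hBt, by
      rw [Set.union_diff_distrib, Set.union_diff_distrib, hsEq, htEq]⟩

/-- Key lemma: cluster points of the sequence agree on sets from `𝔠` that agree outside `D`. -/
lemma key_eq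
    (D : Set ℕ) (𝔠 : Set (Set ℕ))
    (μ : ℕ → ℕ → ℝ) (hsum : ∀ n, Summable fun j => |μ n j|)
    (hnormD : ∀ δ > (0 : ℝ), ∃ n₀ : ℕ, ∀ k m : ℕ, n₀ ≤ k → n₀ ≤ m →
      (∑' j : D, |μ k j - μ m j|) < δ)
    (μ' μ'' : Set ℕ → ℝ)
    (hμ' : IsClusterPtOn μ 𝔠 μ') (hμ'' : IsClusterPtOn μ 𝔠 μ'')
    {B B₀ : Set ℕ} (hB : B ∈ 𝔠) (hB₀ : B₀ ∈ 𝔠) (hBD : B \ D = B₀ \ D) :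
    μ' B - μ'' B = μ' B₀ - μ'' B₀ := by
  by_contra hne
  set x : ℝ := (μ' B - μ'' B) - (μ' B₀ - μ'' B₀) with hx
  have hxpos : 0 < |x| := abs_pos.mpr (sub_ne_zero.mpr hne)
  set ε : ℝ := |x| / 8 with hε
  have hεpos : 0 < ε := by positivity
  obtain ⟨n₀, hn₀⟩ := hnormD ε hεpos
  classical
  have hF : ↑({B, B₀} : Finset (Set ℕ)) ⊆ 𝔠 := by
    intro s hs
    simp only [Finset.coe_insert, Finset.coe_singleton, Set.mem_insert_iff,
      Set.mem_singleton_iff] at hs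
    rcases hs with rfl | rfl <;> assumption
  obtain ⟨k, hk1, hk2⟩ := (hμ' ε hεpos {B, B₀} hF).exists_gt n₀
  obtain ⟨m, hm1, hm2⟩ := (hμ'' ε hεpos {B, B₀} hF).exists_gt n₀
  have hkB : |l1Meas (μ k) B - μ' B| < ε := hk1 B (by simp)
  have hkB₀ : |l1Meas (μ k) B₀ - μ' B₀| < ε := hk1 B₀ (by simp)
  have hmB : |l1Meas (μ m) B - μ'' B| < ε := hm1 B (by simp)
  have hmB₀ : |l1Meas (μ m) B₀ - μ'' B₀| < ε := hm1 B₀ (by simp)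
  set g : ℕ → ℝ := fun j => μ k j - μ m j with hg
  have hgabs : Summable fun j => |g j| := by
    refine Summable.of_nonneg_of_le (fun j => abs_nonneg _) (fun j => ?_) ((hsum k).add (hsum m))
    simpa [hg, sub_eq_add_neg] using abs_add_le (μ k j) (-(μ m j))
  have hgs : Summable g := hgabs.of_abs
  have hD : (∑' j : D, |g j|) < ε := hn₀ k m hk2.le hm2.le
  have hsub : ∀ s : Set ℕ, l1Meas (μ k) s - l1Meas (μ m) s = ∑' j : s, g j := by
    intro s
    exact (Summable.tsum_sub ((hsum k).of_abs.subtype s) ((hsum m).of_abs.subtype s)).symm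
  have hmono : ∀ s : Set ℕ, s ⊆ D → (∑' j : s, |g j|) ≤ ∑' j : D, |g j| := by
    intro s hsD
    rw [tsum_subtype s (fun j => |g j|), tsum_subtype D (fun j => |g j|)]
    exact Summable.tsum_le_tsum
      (fun j => Set.indicator_le_indicator_of_subset hsD (fun a => abs_nonneg _) j)
      (hgabs.indicator s) (hgabs.indicator D)
  have habs : ∀ s : Set ℕ, |∑' j : s, g j| ≤ ∑' j : s, |g j| := by
    intro s
    simpa using norm_tsum_le_tsum_norm (f := (g ∘ (↑) : s → ℝ)) (by exact hgabs.subtype s)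
  have hdiff : |(∑' j : B, g j) - ∑' j : B₀, g j| ≤ 2 * ∑' j : D, |g j| := by
    have d1 : Disjoint (B ∩ B₀) (B \ B₀) := Set.disjoint_left.mpr fun a ha hb => hb.2 ha.2
    have d2 : Disjoint (B₀ ∩ B) (B₀ \ B) := Set.disjoint_left.mpr fun a ha hb => hb.2 ha.2
    have e1 : (∑' j : B, g j) = (∑' j : ↥(B ∩ B₀), g j) + ∑' j : ↥(B \ B₀), g j := by
      rw [← Summable.tsum_union_disjoint d1 (hgs.subtype _) (hgs.subtype _), Set.inter_union_diff]
    have e2 : (∑' j : B₀, g j) = (∑' j : ↥(B ∩ B₀), g j) + ∑' j : ↥(B₀ \ B), g j := by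
      rw [Set.inter_comm B B₀,
        ← Summable.tsum_union_disjoint d2 (hgs.subtype _) (hgs.subtype _), Set.inter_union_diff]
    have hsub1 : B \ B₀ ⊆ D := by
      intro a ha
      by_contra haD
      have h1 : a ∈ B \ D := ⟨ha.1, haD⟩
      rw [hBD] at h1
      exact ha.2 h1.1
    have hsub2 : B₀ \ B ⊆ D := by
      intro a ha
      by_contra haD
      have h1 : a ∈ B₀ \ D := ⟨ha.1, haD⟩
      rw [← hBD] at h1
      exact ha.2 h1.1
    calc |(∑' j : B, g j) - ∑' j : B₀, g j|
        = |(∑' j : ↥(B \ B₀), g j) - ∑' j : ↥(B₀ \ B), g j| := by rw [e1, e2]; ring_nf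
      _ ≤ |∑' j : ↥(B \ B₀), g j| + |∑' j : ↥(B₀ \ B), g j| := abs_sub_le'' _ _
      _ ≤ (∑' j : ↥(B \ B₀), |g j|) + ∑' j : ↥(B₀ \ B), |g j| :=
          add_le_add (habs _) (habs _)
      _ ≤ (∑' j : D, |g j|) + ∑' j : D, |g j| :=
          add_le_add (hmono _ hsub1) (hmono _ hsub2)
      _ = 2 * ∑' j : D, |g j| := by ring
  have hx' : x = -(l1Meas (μ k) B - μ' B) + (l1Meas (μ m) B - μ'' B)
      + (l1Meas (μ k) B₀ - μ' B₀) - (l1Meas (μ m) B₀ - μ'' B₀)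
      + ((∑' j : B, g j) - ∑' j : B₀, g j) := by
    rw [← hsub B, ← hsub B₀, hx]; ring
  have hbound : |x| ≤ |l1Meas (μ k) B - μ' B| + |l1Meas (μ m) B - μ'' B|
      + |l1Meas (μ k) B₀ - μ' B₀| + |l1Meas (μ m) B₀ - μ'' B₀|
      + |(∑' j : B, g j) - ∑' j : B₀, g j| := by
    rw [hx']
    set a := l1Meas (μ k) B - μ' B
    set b := l1Meas (μ m) B - μ'' B
    set c := l1Meas (μ k) B₀ - μ' B₀
    set d := l1Meas (μ m) B₀ - μ'' B₀
    set e := (∑' j : B, g j) - ∑' j : B₀, g j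
    have h5 := abs_add_le (-a + b + c - d) e
    have h4 := abs_sub_le'' (-a + b + c) d
    have h3 := abs_add_le (-a + b) c
    have h2 := abs_add_le (-a) b
    rw [abs_neg] at h2
    linarith
  linarith

/-- if `𝔅` is a subalgebra of `𝒫(ω)`, `D ⊆ ω`, `𝔠` is a subalgebra of the
algebra generated by `𝔅 ∪ 𝒫(D)` (with `𝔅 ⊆ 𝔠`), and `(μₙ) ⊆ ℓ¹` converges in variation norm
on subsets of `D`, then any two cluster points `μ′, μ″` of `(μₙ)` in the topology of pointwise
convergence on `𝔠` satisfy `‖μ′ − μ″‖_𝔅 = ‖μ′ − μ″‖_𝔠`. -/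
theorem stmt5
    (𝔅 : Set (Set ℕ)) (h𝔅 : IsSetAlgebra 𝔅)
    (D : Set ℕ)
    (𝔠 : Set (Set ℕ)) (h𝔠 : IsSetAlgebra 𝔠)
    (h𝔅𝔠 : 𝔅 ⊆ 𝔠)
    (h𝔠sub : 𝔠 ⊆ generateSetAlgebra (𝔅 ∪ {E : Set ℕ | E ⊆ D}))
    (μ : ℕ → ℕ → ℝ) (hsum : ∀ n, Summable fun j => |μ n j|)
    (hnormD : ∀ δ > (0 : ℝ), ∃ n₀ : ℕ, ∀ k m : ℕ, n₀ ≤ k → n₀ ≤ m →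
      (∑' j : D, |μ k j - μ m j|) < δ)
    (μ' μ'' : Set ℕ → ℝ)
    (hμ' : IsClusterPtOn μ 𝔠 μ') (hμ'' : IsClusterPtOn μ 𝔠 μ'') :
    varNormOn 𝔅 (fun B => μ' B - μ'' B) = varNormOn 𝔠 (fun B => μ' B - μ'' B) := by
  set ν : Set ℕ → ℝ := fun B => μ' B - μ'' B with hν
  have key : ∀ B ∈ 𝔠, ∀ B₀ ∈ 𝔠, B \ D = B₀ \ D → ν B = ν B₀ := fun B hB B₀ hB₀ h =>
    key_eq D 𝔠 μ hsum hnormD μ' μ'' hμ' hμ'' hB hB₀ h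
  have hrange : Set.range (fun B : 𝔅 => |ν ↑B| + |ν (↑B : Set ℕ)ᶜ|)
      = Set.range (fun B : 𝔠 => |ν ↑B| + |ν (↑B : Set ℕ)ᶜ|) := by
    apply Set.Subset.antisymm
    · rintro y ⟨⟨B, hB⟩, rfl⟩
      exact ⟨⟨B, h𝔅𝔠 hB⟩, rfl⟩
    · rintro y ⟨⟨B, hB⟩, rfl⟩
      obtain ⟨B₀, hB₀, hEq⟩ := approx_lemma 𝔅 h𝔅 D B (h𝔠sub hB)
      have h1 : ν B = ν B₀ := key B hB B₀ (h𝔅𝔠 hB₀) hEq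
      have hEqc : Bᶜ \ D = B₀ᶜ \ D := by
        ext a
        have := Set.ext_iff.mp hEq a
        simp only [Set.mem_diff, Set.mem_compl_iff] at this ⊢
        tauto
      have h2 : ν Bᶜ = ν B₀ᶜ := key Bᶜ (h𝔠.compl_mem hB) B₀ᶜ (h𝔅𝔠 (h𝔅.compl_mem hB₀)) hEqc
      exact ⟨⟨B₀, hB₀⟩, by simp [h1, h2]⟩
  show sSup (Set.range fun B : 𝔅 => |ν ↑B| + |ν (↑B : Set ℕ)ᶜ|)
      = sSup (Set.range fun B : 𝔠 => |ν ↑B| + |ν (↑B : Set ℕ)ᶜ|)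
  rw [hrange]
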